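/- arXiv:1511.01969 — 2 statements merged into one kernel-verified Lean document; each statement's English description precedes it below -/
import Mathlib

section
/- Conversely, if there exists x* ∈ S and q* ∈ ℝ such that R(x) - q*·P(x) ≤ 0 for all x ∈ S and R(x*) - q*·P(x*) = 0, then x* maximizes R(x)/P(x) over S and the maximum value is q*. -/
/-- Converse Dinkelbach: if `R x - q* P x ≤ 0` on `S` with equality at `x* ∈ S`,
then `x*` maximizes `R/P` over `S` with maximum value `q*`. -/
theorem dinkelbach_converse {X : Type*} (S : Set X) (R P : X → ℝ) (qstar : ℝ)
    (hP : ∀ x ∈ S, 0 < P x) (xstar : X) (hx : xstar ∈ S)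
    (hle : ∀ x ∈ S, R x - qstar * P x ≤ 0)
    (heq : R xstar - qstar * P xstar = 0) :
    (∀ x ∈ S, R x / P x ≤ R xstar / P xstar) ∧ R xstar / P xstar = qstar := by
  have hPs := hP xstar hx
  have hval : R xstar / P xstar = qstar := by
    field_simp
    linarith
  refine ⟨fun x hxS => ?_, hval⟩
  rw [hval]
  have hPx := hP x hxS
  rw [div_le_iff₀ hPx]
  have := hle x hxS
  linarith
end

section
/- F(q*) = 0 if and only if q* = sup_{x∈S} R(x)/P(x), assuming the suprema are attained. -/
/-- `F q* = 0` iff `q*` is the maximum of `R/P` over `S`, assuming both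
the Dinkelbach max and the max of `R/P` are attained. -/
theorem dinkelbach_root_iff {X : Type*} (S : Set X) (R P : X → ℝ)
    (hP : ∀ x ∈ S, 0 < P x) (F : ℝ → ℝ)
    (hF : ∀ q, ∃ x ∈ S, F q = R x - q * P x ∧ ∀ y ∈ S, R y - q * P y ≤ F q)
    (x0 : X) (hx0 : x0 ∈ S) (hmax : ∀ x ∈ S, R x / P x ≤ R x0 / P x0)
    (qstar : ℝ) :
    F qstar = 0 ↔ qstar = R x0 / P x0 := by
  obtain ⟨x, hxS, hFx, hub⟩ := hF qstar
  have hPx := hP x hxS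
  have hPx0 := hP x0 hx0
  constructor
  · intro h0
    rw [h0] at hFx hub
    -- qstar = R x / P x
    have hq : qstar = R x / P x := by field_simp; linarith
    have h1 : qstar ≤ R x0 / P x0 := hq ▸ hmax x hxS
    have h2 : R x0 - qstar * P x0 ≤ 0 := hub x0 hx0
    have h3 : R x0 / P x0 ≤ qstar := by
      rw [div_le_iff₀ hPx0]; linarith
    linarith
  · intro hq
    subst hq
    have hle : F (R x0 / P x0) ≤ 0 := by
      rw [hFx]
      have h := hmax x hxS
      rw [div_le_div_iff₀ hPx hPx0] at h
      have : R x * P x0 ≤ R x0 / P x0 * P x * P x0 := by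
        have e : R x0 / P x0 * P x * P x0 = R x0 * P x := by field_simp
        linarith
      nlinarith
    have hge : 0 ≤ F (R x0 / P x0) := by
      have := hub x0 hx0
      have heq : R x0 - R x0 / P x0 * P x0 = 0 := by field_simp; ring
      linarith
    linarith
end
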